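/- Let (X, μ) and (Y, ν) be sigma-finite measure spaces, 1 < p < ∞, q the conjugate exponent. If x ∈ L_p(X) and f ∈ L_{p,∞}(Y), then the function x ⊗ f on X × Y, (s,t) ↦ x(s)f(t), belongs to L_{p,∞}(X × Y) with ‖x ⊗ f‖_{L_{p,∞}(X×Y)} ≤ q‖x‖_{L_p(X)}‖f‖_{L_{p,∞}(Y)}, where the L_{p,∞} norm is ‖g‖_{L_{p,∞}} = sup_{t>0} t^{−1/q} ∫₀^t μ_g(s) ds and μ_g is the decreasing rearrangement of g. -/

import Mathlib

open MeasureTheory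
open scoped ENNReal

/-!
STATEMENT 7: If x ∈ L_p(X) and f ∈ L_{p,∞}(Y) (1 < p < ∞, 1/p + 1/q = 1), then
x ⊗ f ∈ L_{p,∞}(X × Y) with ‖x ⊗ f‖_{L_{p,∞}} ≤ q ‖x‖_{L_p} ‖f‖_{L_{p,∞}},
where ‖g‖_{L_{p,∞}} = sup_{t>0} t^{−1/q} ∫₀ᵗ μ_g(s) ds.
-/

/-- Decreasing rearrangement of a real function `g` with respect to `μ`. -/
noncomputable def rearrR {α : Type*} [MeasurableSpace α] (μ : Measure α)
    (g : α → ℝ) (s : ℝ) : ℝ :=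
  sInf {u : ℝ | 0 < u ∧ μ {x | u < |g x|} ≤ ENNReal.ofReal s}

namespace Stmt7Aux

variable {α : Type*} [MeasurableSpace α] (μ : Measure α) (g : α → ℝ)

def rset (s : ℝ) : Set ℝ := {u : ℝ | 0 < u ∧ μ {x | u < |g x|} ≤ ENNReal.ofReal s}

lemma rearrR_def (s : ℝ) : rearrR μ g s = sInf (rset μ g s) := rfl

variable {μ g}

lemma rset_bddBelow (s : ℝ) : BddBelow (rset μ g s) :=
  ⟨0, fun u hu => hu.1.le⟩

lemma rearrR_nonneg (s : ℝ) : 0 ≤ rearrR μ g s :=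
  Real.sInf_nonneg (fun u hu => hu.1.le)

lemma rset_mono {s s' : ℝ} (h : s ≤ s') : rset μ g s ⊆ rset μ g s' :=
  fun u hu => ⟨hu.1, hu.2.trans (ENNReal.ofReal_le_ofReal h)⟩

lemma rearrR_le {s v : ℝ} (hv : v ∈ rset μ g s) : rearrR μ g s ≤ v :=
  csInf_le (rset_bddBelow s) hv

lemma le_rearrR {s u : ℝ} (hne : (rset μ g s).Nonempty)
    (h : ∀ v ∈ rset μ g s, u ≤ v) : u ≤ rearrR μ g s :=
  le_csInf hne h

lemma rearrR_antitone {s s' : ℝ} (h : s ≤ s') (hne : (rset μ g s).Nonempty) :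
    rearrR μ g s' ≤ rearrR μ g s :=
  csInf_le_csInf (rset_bddBelow s') hne (rset_mono h)

lemma rearrR_of_empty {s : ℝ} (h : rset μ g s = ∅) : rearrR μ g s = 0 := by
  rw [rearrR_def, h, Real.sInf_empty]

lemma rearrR_le_of_forall {s b : ℝ} (hb : 0 ≤ b)
    (h : ∀ ε > 0, b + ε ∈ rset μ g s) : rearrR μ g s ≤ b := by
  refine le_of_forall_pos_le_add fun ε hε => rearrR_le (h ε hε)

end Stmt7Aux

namespace Stmt7Aux
variable {α : Type*} [MeasurableSpace α] {μ : Measure α} {g : α → ℝ}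

lemma le_of_mem_rset {s u v : ℝ} (h : ENNReal.ofReal s < μ {y | u < |g y|})
    (hv : v ∈ rset μ g s) : u ≤ v := by
  by_contra hlt
  push_neg at hlt
  have hsub : {y | u < |g y|} ⊆ {y | v < |g y|} := fun y hy => lt_trans hlt hy
  exact absurd (hv.2.trans_lt h) (not_lt.2 (measure_mono hsub))

lemma rset_nonempty (hgm : Measurable g) {v₀ : ℝ}
    (hfin : μ {y | v₀ < |g y|} ≠ ∞) {s : ℝ} (hs : 0 < s) :
    (rset μ g s).Nonempty := by
  have hmeas : ∀ n : ℕ, NullMeasurableSet {y | v₀ + n < |g y|} μ := fun n =>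
    (measurableSet_lt measurable_const hgm.abs).nullMeasurableSet
  have hanti : Antitone (fun n : ℕ => {y | v₀ + n < |g y|}) := by
    intro m n hmn y hy
    simp only [Set.mem_setOf_eq] at hy ⊢
    have : (m:ℝ) ≤ n := by exact_mod_cast hmn
    linarith
  have hiInter : (⋂ n : ℕ, {y | v₀ + n < |g y|}) = ∅ := by
    ext y
    simp only [Set.mem_iInter, Set.mem_setOf_eq, Set.mem_empty_iff_false, iff_false, not_forall,
      not_lt]
    obtain ⟨n, hn⟩ := exists_nat_ge (abs (g y) - v₀)
    exact ⟨n, by linarith⟩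
  have htend := tendsto_measure_iInter_atTop hmeas hanti
    ⟨0, by simpa using hfin⟩
  rw [hiInter, measure_empty] at htend
  have : ∀ᶠ n : ℕ in Filter.atTop, μ {y | v₀ + n < |g y|} < ENNReal.ofReal s := by
    exact htend.eventually_lt_const (by simpa using hs)
  obtain ⟨n, hn⟩ := this.exists
  refine ⟨max v₀ 0 + n + 1, ⟨by positivity, le_trans (measure_mono ?_) hn.le⟩⟩
  intro y hy
  simp only [Set.mem_setOf_eq] at hy ⊢
  have : v₀ ≤ max v₀ 0 := le_max_left _ _
  linarith

end Stmt7Aux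

namespace Stmt7Aux
variable {β : Type*} [MeasurableSpace β] {ν : Measure β} {f : β → ℝ}

lemma distribution_le (hfm : Measurable f) {p q S : ℝ} (hp : 1 < p)
    (hpq : 1 / p + 1 / q = 1) (hS0 : 0 ≤ S)
    (hS : ∀ t > (0:ℝ), t ^ (-(1 / q)) * ∫ s in (0:ℝ)..t, rearrR ν f s ≤ S)
    (hI : ∀ s > (0:ℝ), IntervalIntegrable (rearrR ν f) volume 0 s)
    {v₀ : ℝ} (hfin : ν {y | v₀ < |f y|} ≠ ⊤)
    {u : ℝ} (hu : 0 < u) :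
    ν {y | u < |f y|} ≤ ENNReal.ofReal ((S / u) ^ p) := by
  set a := (S / u) ^ p with ha_def
  have ha : 0 ≤ a := Real.rpow_nonneg (div_nonneg hS0 hu.le) p
  by_contra hcon
  push_neg at hcon
  obtain ⟨c, hc1, hc2⟩ := exists_between hcon
  have hcne : c ≠ ⊤ := (lt_of_lt_of_le hc2 le_top).ne
  set s := c.toReal with hs_def
  have has : a < s := (ENNReal.ofReal_lt_iff_lt_toReal ha hcne).1 hc1
  have hs0 : 0 < s := lt_of_le_of_lt ha has
  have hsc : ENNReal.ofReal s = c := ENNReal.ofReal_toReal hcne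
  have hkey : ∀ s' ∈ Set.Ioc (0:ℝ) s, u ≤ rearrR ν f s' := by
    intro s' hs'
    refine le_rearrR (rset_nonempty hfm hfin hs'.1) fun v hv => le_of_mem_rset ?_ hv
    exact lt_of_le_of_lt (le_trans (ENNReal.ofReal_le_ofReal hs'.2) hsc.le) hc2
  have hint : (u * s) ≤ ∫ s' in (0:ℝ)..s, rearrR ν f s' := by
    rw [intervalIntegral.integral_of_le hs0.le]
    have h1 : ∫ _ in Set.Ioc (0:ℝ) s, u = u * s := by
      simp [Real.volume_Ioc, hs0.le, mul_comm]
    rw [← h1]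
    refine setIntegral_mono_on (integrableOn_const ?_)
      ((intervalIntegrable_iff_integrableOn_Ioc_of_le hs0.le).1 (hI s hs0))
      measurableSet_Ioc hkey
    simp [Real.volume_Ioc, hs0]
  have hE : s ^ (-(1 / q)) * ∫ s' in (0:ℝ)..s, rearrR ν f s' ≤ S := hS s hs0
  have hq1 : 1 - 1 / q = 1 / p := by linarith
  have hlow : u * s ^ (1 / p) ≤ S := by
    calc u * s ^ (1 / p) = s ^ (-(1 / q)) * (u * s) := by
          rw [← hq1, sub_eq_add_neg, Real.rpow_add hs0, Real.rpow_one]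
          ring
      _ ≤ s ^ (-(1 / q)) * ∫ s' in (0:ℝ)..s, rearrR ν f s' := by
          have := Real.rpow_nonneg hs0.le (-(1 / q))
          nlinarith
      _ ≤ S := hE
  have hstrict : S < u * s ^ (1 / p) := by
    have h1 : a ^ (1 / p) < s ^ (1 / p) := by
      refine Real.rpow_lt_rpow ha has (by positivity)
    have hp0 : p ≠ 0 := by positivity
    have h2 : a ^ (1 / p) = S / u := by
      rw [ha_def, ← Real.rpow_mul (div_nonneg hS0 hu.le), mul_one_div_cancel hp0,
        Real.rpow_one]
    have h3 : S = u * a ^ (1 / p) := by rw [h2]; field_simp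
    nlinarith [mul_lt_mul_of_pos_left h1 hu]
  linarith

end Stmt7Aux

namespace Stmt7Aux

lemma rearrR_le_of_dist_le {γ : Type*} [MeasurableSpace γ] {m : Measure γ} {g : γ → ℝ}
    {c p : ℝ} (hc : 0 ≤ c) (hp : 1 < p)
    (hB : ∀ v > (0:ℝ), m {w | v < |g w|} ≤ ENNReal.ofReal ((c / v) ^ p))
    {s : ℝ} (hs : 0 < s) :
    rearrR m g s ≤ c * s ^ (-(1 / p)) := by
  have hp0 : (0:ℝ) < p := by linarith
  have hb : 0 ≤ c * s ^ (-(1 / p)) := by positivity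
  refine rearrR_le_of_forall hb fun ε hε => ?_
  set v := c * s ^ (-(1 / p)) + ε with hv_def
  have hv : 0 < v := by positivity
  refine ⟨hv, le_trans (hB v hv) (ENNReal.ofReal_le_ofReal ?_)⟩
  rcases eq_or_lt_of_le hc with hc0 | hc0
  · rw [← hc0]
    simp only [zero_div]
    rw [Real.zero_rpow hp0.ne']
    exact hs.le
  · have hb0 : 0 < c * s ^ (-(1 / p)) := by positivity
    have h1 : c / v ≤ s ^ (1 / p) := by
      rw [div_le_iff₀ hv]
      have h2 : s ^ (1 / p) * (c * s ^ (-(1 / p))) = c := by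
        rw [show s ^ (1 / p) * (c * s ^ (-(1 / p))) = c * (s ^ (1 / p) * s ^ (-(1 / p))) by ring,
          ← Real.rpow_add hs, add_neg_cancel, Real.rpow_zero, mul_one]
      nlinarith [Real.rpow_nonneg hs.le (1 / p)]
    calc (c / v) ^ p ≤ (s ^ (1 / p)) ^ p :=
          Real.rpow_le_rpow (by positivity) h1 hp0.le
      _ = s := by
          rw [← Real.rpow_mul hs.le, one_div_mul_cancel hp0.ne', Real.rpow_one]

lemma prod_dist_eq {X Y : Type*} [MeasurableSpace X] [MeasurableSpace Y]
    (μ : Measure X) (ν : Measure Y) [SigmaFinite ν]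
    {x : X → ℝ} {f : Y → ℝ} (hxm : Measurable x) (hfm : Measurable f) (v : ℝ) :
    (μ.prod ν) {w : X × Y | v < |x w.1 * f w.2|} =
      ∫⁻ w1, ν {w2 | v < |x w1 * f w2|} ∂μ := by
  have hms : MeasurableSet {w : X × Y | v < |x w.1 * f w.2|} :=
    measurableSet_lt measurable_const ((hxm.comp measurable_fst).mul
      (hfm.comp measurable_snd)).abs
  rw [Measure.prod_apply hms]
  rfl

lemma section_dist_le {Y : Type*} [MeasurableSpace Y] {ν : Measure Y}
    {f : Y → ℝ} {p S : ℝ} (hp : 1 < p) (hS0 : 0 ≤ S)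
    (hA : ∀ u > (0:ℝ), ν {y | u < |f y|} ≤ ENNReal.ofReal ((S / u) ^ p))
    {v : ℝ} (hv : 0 < v) (b : ℝ) :
    ν {w2 | v < |b * f w2|} ≤ ENNReal.ofReal ((S / v) ^ p * |b| ^ p) := by
  rcases eq_or_ne b 0 with hb | hb
  · have : {w2 : Y | v < |b * f w2|} = ∅ := by
      ext w2; simp [hb, hv.not_gt]
    rw [this, measure_empty]
    exact zero_le
  · have hba : 0 < |b| := abs_pos.2 hb
    have hset : {w2 : Y | v < |b * f w2|} = {y | v / |b| < |f y|} := by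
      ext y
      rw [Set.mem_setOf_eq, Set.mem_setOf_eq, abs_mul, div_lt_iff₀ hba, mul_comm]
    rw [hset]
    refine le_trans (hA _ (by positivity)) (le_of_eq ?_)
    congr 1
    rw [div_div_eq_mul_div, Real.div_rpow (by positivity) hv.le,
      Real.mul_rpow hS0 hba.le, Real.div_rpow hS0 hv.le]
    ring

end Stmt7Aux

namespace Stmt7Aux

lemma prod_dist_le {X Y : Type*} [MeasurableSpace X] [MeasurableSpace Y]
    {μ : Measure X} {ν : Measure Y} [SigmaFinite ν]
    {x : X → ℝ} {f : Y → ℝ} (hxm : Measurable x) (hfm : Measurable f)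
    {p S : ℝ} (hp : 1 < p) (hS0 : 0 ≤ S)
    (hxp : Integrable (fun s => |x s| ^ p) μ)
    (hA : ∀ u > (0:ℝ), ν {y | u < |f y|} ≤ ENNReal.ofReal ((S / u) ^ p))
    {v : ℝ} (hv : 0 < v) :
    (μ.prod ν) {w : X × Y | v < |x w.1 * f w.2|} ≤
      ENNReal.ofReal ((S * (∫ s, |x s| ^ p ∂μ) ^ (1 / p) / v) ^ p) := by
  have hp0 : (0:ℝ) < p := by linarith
  set I := ∫ s, |x s| ^ p ∂μ with hI_def
  have hI0 : 0 ≤ I := integral_nonneg fun s => Real.rpow_nonneg (abs_nonneg _) p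
  rw [prod_dist_eq μ ν hxm hfm v]
  calc ∫⁻ w1, ν {w2 | v < |x w1 * f w2|} ∂μ
      ≤ ∫⁻ w1, ENNReal.ofReal ((S / v) ^ p * |x w1| ^ p) ∂μ :=
        lintegral_mono fun w1 => section_dist_le hp hS0 hA hv (x w1)
    _ = ∫⁻ w1, ENNReal.ofReal ((S / v) ^ p) * ENNReal.ofReal (|x w1| ^ p) ∂μ := by
        congr 1
        ext w1
        rw [ENNReal.ofReal_mul (by positivity)]
    _ = ENNReal.ofReal ((S / v) ^ p) * ∫⁻ w1, ENNReal.ofReal (|x w1| ^ p) ∂μ :=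
        lintegral_const_mul' _ _ ENNReal.ofReal_ne_top
    _ = ENNReal.ofReal ((S / v) ^ p) * ENNReal.ofReal I := by
        rw [← ofReal_integral_eq_lintegral_ofReal hxp
          (Filter.Eventually.of_forall fun s => Real.rpow_nonneg (abs_nonneg _) p)]
    _ = ENNReal.ofReal ((S / v) ^ p * I) := by
        rw [← ENNReal.ofReal_mul (by positivity)]
    _ = ENNReal.ofReal ((S * I ^ (1 / p) / v) ^ p) := by
        congr 1
        rw [div_eq_mul_inv (S * I ^ (1 / p)) v, mul_assoc,
          Real.mul_rpow hS0 (by positivity), Real.mul_rpow (by positivity)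
            (by positivity), ← Real.rpow_mul hI0, one_div_mul_cancel hp0.ne',
          Real.rpow_one, Real.div_rpow hS0 hv.le, Real.inv_rpow hv.le]
        ring

end Stmt7Aux

namespace Stmt7Aux

lemma q_pos {p q : ℝ} (hp : 1 < p) (hpq : 1 / p + 1 / q = 1) : 0 < q := by
  have h1 : 0 < 1 / q := by
    have : 1 / p < 1 := by
      rw [div_lt_one (by linarith)]; linarith
    linarith
  exact (one_div_pos).1 h1

lemma main_bound {γ : Type*} [MeasurableSpace γ] {m : Measure γ} {g : γ → ℝ}
    {c p q : ℝ} (hc : 0 ≤ c) (hp : 1 < p) (hpq : 1 / p + 1 / q = 1)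
    (hPB : ∀ s > (0:ℝ), rearrR m g s ≤ c * s ^ (-(1 / p)))
    {t : ℝ} (ht : 0 < t) :
    t ^ (-(1 / q)) * ∫ s in (0:ℝ)..t, rearrR m g s ≤ q * c := by
  have hq : 0 < q := q_pos hp hpq
  have hp0 : (0:ℝ) < p := by linarith
  have h1p : 1 / p < 1 := by rw [div_lt_one hp0]; linarith
  have hexp : -(1 / p) + 1 = 1 / q := by linarith
  by_cases hInt : IntervalIntegrable (rearrR m g) volume 0 t
  · have hri : IntervalIntegrable (fun s : ℝ => c * s ^ (-(1 / p))) volume 0 t :=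
      (intervalIntegral.intervalIntegrable_rpow' (by linarith)).const_mul c
    have hmono : ∫ s in (0:ℝ)..t, rearrR m g s ≤ ∫ s in (0:ℝ)..t, c * s ^ (-(1 / p)) := by
      rw [intervalIntegral.integral_of_le ht.le, intervalIntegral.integral_of_le ht.le]
      refine setIntegral_mono_on
        ((intervalIntegrable_iff_integrableOn_Ioc_of_le ht.le).1 hInt)
        ((intervalIntegrable_iff_integrableOn_Ioc_of_le ht.le).1 hri)
        measurableSet_Ioc (fun s hs => hPB s hs.1)
    have hval : ∫ s in (0:ℝ)..t, c * s ^ (-(1 / p)) = c * (t ^ (1 / q) * q) := by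
      rw [intervalIntegral.integral_const_mul, integral_rpow (Or.inl (by linarith)),
        hexp, Real.zero_rpow (by positivity : (1:ℝ)/q ≠ 0), sub_zero]
      field_simp
    have htq : (0:ℝ) ≤ t ^ (-(1 / q)) := Real.rpow_nonneg ht.le _
    calc t ^ (-(1 / q)) * ∫ s in (0:ℝ)..t, rearrR m g s
        ≤ t ^ (-(1 / q)) * (c * (t ^ (1 / q) * q)) := by
          rw [← hval]; exact mul_le_mul_of_nonneg_left hmono htq
      _ = q * c * (t ^ (-(1 / q)) * t ^ (1 / q)) := by ring
      _ = q * c := by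
          rw [← Real.rpow_add ht, neg_add_cancel, Real.rpow_zero, mul_one]
  · rw [intervalIntegral.integral_undef hInt, mul_zero]
    positivity

end Stmt7Aux

namespace Stmt7Aux

lemma rearrR_eq_zero_of_dist_zero {γ : Type*} [MeasurableSpace γ] {m : Measure γ}
    {g : γ → ℝ} (h : ∀ v > (0:ℝ), m {w | v < |g w|} = 0) (s : ℝ) :
    rearrR m g s = 0 := by
  refine le_antisymm ?_ (rearrR_nonneg s)
  refine rearrR_le_of_forall le_rfl fun ε hε => ?_
  rw [zero_add]
  exact ⟨hε, by rw [h ε hε]; exact zero_le⟩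

lemma rearrR_eq_zero_of_dist_top {γ : Type*} [MeasurableSpace γ] {m : Measure γ}
    {g : γ → ℝ} (h : ∀ v > (0:ℝ), m {w | v < |g w|} = ⊤) (s : ℝ) :
    rearrR m g s = 0 := by
  refine rearrR_of_empty (Set.eq_empty_iff_forall_notMem.2 fun v hv => ?_)
  have := hv.2
  rw [h v hv.1] at this
  exact absurd (lt_of_le_of_lt this ENNReal.ofReal_lt_top) (lt_irrefl _)

lemma exists_pos_level {γ : Type*} [MeasurableSpace γ] {m : Measure γ} {g : γ → ℝ}
    (hg : m {w | g w ≠ 0} ≠ 0) : ∃ ε > (0:ℝ), m {w | ε < |g w|} ≠ 0 := by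
  by_contra hcon
  push_neg at hcon
  apply hg
  have hsub : {w | g w ≠ 0} ⊆ ⋃ n : ℕ, {w | 1 / (n + 1) < |g w|} := by
    intro w hw
    obtain ⟨n, hn⟩ := exists_nat_one_div_lt (abs_pos.2 hw)
    exact Set.mem_iUnion.2 ⟨n, hn⟩
  refine le_antisymm (le_trans (measure_mono hsub) ?_) zero_le
  rw [measure_iUnion_null fun n => hcon _ (by positivity)]

lemma prod_dist_ge {X Y : Type*} [MeasurableSpace X] [MeasurableSpace Y]
    (μ : Measure X) (ν : Measure Y) [SigmaFinite ν]
    {x : X → ℝ} {f : Y → ℝ} (hxm : Measurable x) (hfm : Measurable f)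
    {ε v : ℝ} (hε : 0 < ε) (hv : 0 < v) :
    μ {w | ε < |x w|} * ν {y | v / ε < |f y|} ≤
      (μ.prod ν) {w : X × Y | v < |x w.1 * f w.2|} := by
  rw [← Measure.prod_prod]
  refine measure_mono fun w hw => ?_
  obtain ⟨h1, h2⟩ := hw
  simp only [Set.mem_setOf_eq] at h1 h2 ⊢
  rw [abs_mul]
  have hf0 : 0 < |f w.2| := lt_of_le_of_lt (by positivity) h2
  have := (div_lt_iff₀ hε).1 h2
  nlinarith

end Stmt7Aux

namespace Stmt7Aux

lemma integrableOn_of_bounded_integrals {h : ℝ → ℝ} {b : ℝ} (hb : 0 < b)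
    (hnn : ∀ s, 0 ≤ h s) (hanti : AntitoneOn h (Set.Ioi 0)) (M : ℝ)
    (hM : ∀ a ∈ Set.Ioo (0:ℝ) b, ∫ s in Set.Ioc a b, h s ≤ M) :
    IntegrableOn h (Set.Ioc 0 b) := by
  have hmem : ∀ n : ℕ, b / (n + 2) ∈ Set.Ioo (0:ℝ) b := by
    intro n
    constructor
    · positivity
    · rw [div_lt_iff₀ (by positivity)]
      nlinarith
  have hfi : ∀ n : ℕ, IntegrableOn h (Set.Ioc (b / (n + 2)) b) := by
    intro n
    refine (intervalIntegrable_iff_integrableOn_Ioc_of_le (hmem n).2.le).1 ?_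
    refine AntitoneOn.intervalIntegrable (hanti.mono ?_)
    rw [Set.uIcc_of_le (hmem n).2.le]
    exact fun s hs => lt_of_lt_of_le (hmem n).1 hs.1
  refine integrableOn_Ioc_of_intervalIntegral_norm_bounded_left (l := Filter.atTop)
    (a := fun n : ℕ => b / (n + 2)) (I := M) hfi ?_ ?_
  · have := (tendsto_const_div_atTop_nhds_zero_nat b).comp (Filter.tendsto_add_atTop_nat 2)
    refine this.congr fun n => ?_
    simp [Function.comp]
  · refine Filter.Eventually.of_forall fun n => ?_
    have : ∀ s ∈ Set.Ioc (b / (n + 2)) b, ‖h s‖ = h s := fun s _ => Real.norm_of_nonneg (hnn s)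
    rw [setIntegral_congr_fun measurableSet_Ioc this]
    exact hM _ (hmem n)

end Stmt7Aux

namespace Stmt7Aux

lemma W_integral_zero {X Y : Type*} [MeasurableSpace X] [MeasurableSpace Y]
    (μ : Measure X) (ν : Measure Y) [SigmaFinite ν]
    {x : X → ℝ} {f : Y → ℝ} (hxm : Measurable x) (hfm : Measurable f)
    (hfNI : ∀ s > (0:ℝ), ¬ IntervalIntegrable (rearrR ν f) volume 0 s)
    {v₀ : ℝ} (hfin : ν {y | v₀ < |f y|} ≠ ⊤)
    {t : ℝ} (ht : 0 < t) :
    ∫ s in (0:ℝ)..t, rearrR (μ.prod ν) (fun w => x w.1 * f w.2) s = 0 := by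
  have hgm : Measurable fun w : X × Y => x w.1 * f w.2 :=
    (hxm.comp measurable_fst).mul (hfm.comp measurable_snd)
  by_cases hPI : IntervalIntegrable
      (rearrR (μ.prod ν) (fun w => x w.1 * f w.2)) volume 0 t
  swap
  · exact intervalIntegral.integral_undef hPI
  by_cases hfz : ∃ u > (0:ℝ), ν {y | u < |f y|} = 0
  · exfalso
    obtain ⟨u, hu, hz⟩ := hfz
    refine hfNI 1 one_pos (AntitoneOn.intervalIntegrable ?_)
    rw [Set.uIcc_of_le zero_le_one]
    exact fun a _ b _ hab =>
      rearrR_antitone hab ⟨u, hu, by rw [hz]; exact zero_le⟩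
  push_neg at hfz
  by_cases hx0 : μ {w | x w ≠ 0} = 0
  · have hzero : ∀ s, rearrR (μ.prod ν) (fun w => x w.1 * f w.2) s = 0 := by
      refine rearrR_eq_zero_of_dist_zero fun v hv => ?_
      have hsub : {w : X × Y | v < |x w.1 * f w.2|} ⊆
          {w : X | x w ≠ 0} ×ˢ (Set.univ : Set Y) := by
        intro w hw
        simp only [Set.mem_setOf_eq] at hw
        refine ⟨fun h0 => ?_, Set.mem_univ _⟩
        rw [h0, zero_mul, abs_zero] at hw
        exact absurd hw hv.not_gt
      exact measure_mono_null hsub (by rw [Measure.prod_prod, hx0, zero_mul])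
    simp only [hzero]
    simp
  obtain ⟨ε, hε, hxε⟩ := exists_pos_level hx0
  set m₀ := μ {w | ε < |x w|} with hm₀_def
  by_cases hm₀top : m₀ = ⊤
  · have hzero : ∀ s, rearrR (μ.prod ν) (fun w => x w.1 * f w.2) s = 0 := by
      refine rearrR_eq_zero_of_dist_top fun v hv => ?_
      refine top_le_iff.1 (le_trans ?_ (prod_dist_ge μ ν hxm hfm hε hv))
      rw [← hm₀_def, hm₀top, ENNReal.top_mul (hfz _ (by positivity))]
    simp only [hzero]
    simp
  by_cases hPtop : ∀ v > (0:ℝ), (μ.prod ν) {w : X × Y | v < |x w.1 * f w.2|} = ⊤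
  · have hzero : ∀ s, rearrR (μ.prod ν) (fun w => x w.1 * f w.2) s = 0 :=
      rearrR_eq_zero_of_dist_top hPtop
    simp only [hzero]
    simp
  push_neg at hPtop
  obtain ⟨v₃, hv₃, hPfin⟩ := hPtop
  exfalso
  -- setup
  have hm₀0 : m₀ ≠ 0 := hxε
  set r := m₀.toReal with hr_def
  have hr : 0 < r := ENNReal.toReal_pos hm₀0 hm₀top
  have htr : 0 < t / r := div_pos ht hr
  have hProdNE : ∀ s > (0:ℝ),
      (rset (μ.prod ν) (fun w => x w.1 * f w.2) s).Nonempty :=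
    fun s hs => rset_nonempty hgm hPfin hs
  have hfNE : ∀ s > (0:ℝ), (rset ν f s).Nonempty :=
    fun s hs => rset_nonempty hfm hfin hs
  have hfanti : AntitoneOn (rearrR ν f) (Set.Ioi 0) :=
    fun a ha _ _ hab => rearrR_antitone hab (hfNE a ha)
  -- key pointwise lower bound
  have hlow : ∀ s > (0:ℝ),
      ε * rearrR ν f (s / r) ≤ rearrR (μ.prod ν) (fun w => x w.1 * f w.2) s := by
    intro s hs
    refine le_rearrR (hProdNE s hs) fun v hv => ?_
    have h1 : m₀ * ν {y | v / ε < |f y|} ≤ ENNReal.ofReal s :=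
      le_trans (prod_dist_ge μ ν hxm hfm hε hv.1) hv.2
    have h2 : ν {y | v / ε < |f y|} ≤ ENNReal.ofReal (s / r) := by
      have hm : ENNReal.ofReal r = m₀ := ENNReal.ofReal_toReal hm₀top
      rw [ENNReal.ofReal_div_of_pos hr, hm,
        ENNReal.le_div_iff_mul_le (Or.inl hm₀0) (Or.inl hm₀top), mul_comm]
      exact h1
    have h4 : rearrR ν f (s / r) ≤ v / ε := rearrR_le ⟨div_pos hv.1 hε, h2⟩
    calc ε * rearrR ν f (s / r) ≤ ε * (v / ε) := mul_le_mul_of_nonneg_left h4 hε.le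
      _ = v := mul_div_cancel₀ v hε.ne'
  -- bounded integrals
  set M := (∫ s in (0:ℝ)..t,
      rearrR (μ.prod ν) (fun w => x w.1 * f w.2) s) / (ε * r) with hM_def
  have hMb : ∀ a ∈ Set.Ioo (0:ℝ) (t / r), ∫ s in Set.Ioc a (t / r), rearrR ν f s ≤ M := by
    intro a ha
    set a' := a * r with ha'_def
    have ha'0 : 0 < a' := mul_pos ha.1 hr
    have ha't : a' < t := by
      have := (lt_div_iff₀ hr).1 ha.2
      linarith
    have hcompanti : AntitoneOn (fun s => ε * rearrR ν f (s / r)) (Set.uIcc a' t) := by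
      rw [Set.uIcc_of_le (le_of_lt ha't)]
      intro b1 hb1 b2 hb2 hb
      refine mul_le_mul_of_nonneg_left ?_ hε.le
      exact hfanti (div_pos (lt_of_lt_of_le ha'0 hb1.1) hr)
        (div_pos (lt_of_lt_of_le ha'0 hb2.1) hr) (by gcongr)
    have hcompint : IntervalIntegrable (fun s => ε * rearrR ν f (s / r)) volume a' t :=
      hcompanti.intervalIntegrable
    have hPIsub : IntervalIntegrable
        (rearrR (μ.prod ν) (fun w => x w.1 * f w.2)) volume a' t := by
      refine hPI.mono_set ?_
      rw [Set.uIcc_of_le (le_of_lt ha't), Set.uIcc_of_le ht.le]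
      exact Set.Icc_subset_Icc ha'0.le le_rfl
    have hstep1 : ∫ s in a'..t, ε * rearrR ν f (s / r) ≤
        ∫ s in a'..t, rearrR (μ.prod ν) (fun w => x w.1 * f w.2) s :=by
      refine intervalIntegral.integral_mono_on ha't.le hcompint hPIsub fun s hs => ?_
      exact hlow s (lt_of_lt_of_le ha'0 hs.1)
    have hstep2 : ∫ s in a'..t, rearrR (μ.prod ν) (fun w => x w.1 * f w.2) s ≤
        ∫ s in (0:ℝ)..t, rearrR (μ.prod ν) (fun w => x w.1 * f w.2) s := by
      have hm1 : IntervalIntegrable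
          (rearrR (μ.prod ν) (fun w => x w.1 * f w.2)) volume 0 a' := by
        refine hPI.mono_set ?_
        rw [Set.uIcc_of_le ha'0.le, Set.uIcc_of_le ht.le]
        exact Set.Icc_subset_Icc le_rfl ha't.le
      have hsplit := intervalIntegral.integral_add_adjacent_intervals hm1 hPIsub
      rw [← hsplit]
      have hfirst : 0 ≤ ∫ s in (0:ℝ)..a',
          rearrR (μ.prod ν) (fun w => x w.1 * f w.2) s :=
        intervalIntegral.integral_nonneg ha'0.le fun u _ => rearrR_nonneg u
      linarith
    have hval : ∫ s in a'..t, ε * rearrR ν f (s / r) =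
        ε * r * ∫ s in a..(t / r), rearrR ν f s := by
      rw [intervalIntegral.integral_const_mul, intervalIntegral.integral_comp_div
        (f := rearrR ν f) hr.ne', ha'_def, mul_div_assoc, div_self hr.ne', mul_one]
      rw [smul_eq_mul]
      ring
    have hioc : ∫ s in Set.Ioc a (t / r), rearrR ν f s =
        ∫ s in a..(t / r), rearrR ν f s := by
      rw [intervalIntegral.integral_of_le (le_of_lt (lt_of_lt_of_le ha.2 le_rfl))]
    rw [hioc, hM_def, le_div_iff₀ (by positivity)]
    calc (∫ s in a..(t / r), rearrR ν f s) * (ε * r)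
        = ∫ s in a'..t, ε * rearrR ν f (s / r) := by rw [hval]; ring
      _ ≤ _ := le_trans hstep1 hstep2
  -- contradiction
  refine hfNI (t / r) htr ?_
  rw [intervalIntegrable_iff_integrableOn_Ioc_of_le htr.le]
  exact integrableOn_of_bounded_integrals htr (fun s => rearrR_nonneg s) hfanti M hMb

end Stmt7Aux

open Stmt7Aux

theorem stmt7 {X Y : Type*} [MeasurableSpace X] [MeasurableSpace Y]
    (μ : Measure X) (ν : Measure Y) [SigmaFinite μ] [SigmaFinite ν]
    (p q : ℝ) (hp : 1 < p) (hpq : 1 / p + 1 / q = 1)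
    (x : X → ℝ) (f : Y → ℝ) (hxm : Measurable x) (hfm : Measurable f)
    -- x ∈ L_p(X)
    (hxp : Integrable (fun s => |x s| ^ p) μ)
    -- f ∈ L_{p,∞}(Y): the defining supremum is finite
    (hfw : BddAbove {r : ℝ | ∃ t : ℝ, 0 < t ∧
      r = t ^ (-(1 / q)) * ∫ s in (0:ℝ)..t, rearrR ν f s}) :
    ∀ t : ℝ, 0 < t →
      t ^ (-(1 / q)) * (∫ s in (0:ℝ)..t, rearrR (μ.prod ν) (fun w => x w.1 * f w.2) s) ≤
        q * (∫ s, |x s| ^ p ∂μ) ^ (1 / p) *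
          sSup {r : ℝ | ∃ t : ℝ, 0 < t ∧
            r = t ^ (-(1 / q)) * ∫ s in (0:ℝ)..t, rearrR ν f s} := by
  intro t ht
  classical
  set S := sSup {r : ℝ | ∃ t : ℝ, 0 < t ∧
      r = t ^ (-(1 / q)) * ∫ s in (0:ℝ)..t, rearrR ν f s} with hS_def
  set I := ∫ s, |x s| ^ p ∂μ with hI_def
  have hq : 0 < q := q_pos hp hpq
  have hp0 : (0:ℝ) < p := by linarith
  have hI0 : 0 ≤ I := integral_nonneg fun s => Real.rpow_nonneg (abs_nonneg _) p
  have hS0 : 0 ≤ S := by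
    have h1 : (1:ℝ) ^ (-(1 / q)) * ∫ s in (0:ℝ)..1, rearrR ν f s ∈
        {r : ℝ | ∃ t : ℝ, 0 < t ∧
          r = t ^ (-(1 / q)) * ∫ s in (0:ℝ)..t, rearrR ν f s} := ⟨1, one_pos, rfl⟩
    have h2 : (0:ℝ) ≤ (1:ℝ) ^ (-(1 / q)) * ∫ s in (0:ℝ)..1, rearrR ν f s := by
      rw [Real.one_rpow, one_mul]
      exact intervalIntegral.integral_nonneg zero_le_one fun u _ => rearrR_nonneg u
    exact le_trans h2 (le_csSup hfw h1)
  have hRHS0 : 0 ≤ q * I ^ (1 / p) * S :=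
    mul_nonneg (mul_nonneg hq.le (Real.rpow_nonneg hI0 _)) hS0
  by_cases hnd : ∃ v₀ : ℝ, ν {y | v₀ < |f y|} ≠ ⊤
  · obtain ⟨v₀, hfin⟩ := hnd
    by_cases hfI : IntervalIntegrable (rearrR ν f) volume 0 1
    · -- main case
      have hfNE : ∀ s > (0:ℝ), (rset ν f s).Nonempty :=
        fun s hs => rset_nonempty hfm hfin hs
      have hIall : ∀ s > (0:ℝ), IntervalIntegrable (rearrR ν f) volume 0 s := by
        intro s hs
        rcases le_or_gt s 1 with h | h
        · refine hfI.mono_set ?_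
          rw [Set.uIcc_of_le hs.le, Set.uIcc_of_le zero_le_one]
          exact Set.Icc_subset_Icc le_rfl h
        · refine hfI.trans (AntitoneOn.intervalIntegrable ?_)
          rw [Set.uIcc_of_le h.le]
          exact fun a ha _ _ hab =>
            rearrR_antitone hab (hfNE a (lt_of_lt_of_le one_pos ha.1))
      have hS : ∀ t' > (0:ℝ), t' ^ (-(1 / q)) * ∫ s in (0:ℝ)..t', rearrR ν f s ≤ S :=
        fun t' ht' => le_csSup hfw ⟨t', ht', rfl⟩
      have hA : ∀ u > (0:ℝ), ν {y | u < |f y|} ≤ ENNReal.ofReal ((S / u) ^ p) :=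
        fun u hu => distribution_le hfm hp hpq hS0 hS hIall hfin hu
      have hc0 : 0 ≤ S * I ^ (1 / p) := mul_nonneg hS0 (Real.rpow_nonneg hI0 _)
      have hPB : ∀ s > (0:ℝ), rearrR (μ.prod ν) (fun w => x w.1 * f w.2) s ≤
          (S * I ^ (1 / p)) * s ^ (-(1 / p)) :=
        fun s hs => rearrR_le_of_dist_le hc0 hp
          (fun v hv => prod_dist_le hxm hfm hp hS0 hxp hA hv) hs
      calc t ^ (-(1 / q)) * ∫ s in (0:ℝ)..t,
            rearrR (μ.prod ν) (fun w => x w.1 * f w.2) s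
          ≤ q * (S * I ^ (1 / p)) := main_bound hc0 hp hpq hPB ht
        _ = q * I ^ (1 / p) * S := by ring
    · -- non-integrable (weird) case
      have hfNI : ∀ s > (0:ℝ), ¬ IntervalIntegrable (rearrR ν f) volume 0 s := by
        intro s hs hint
        apply hfI
        rcases le_or_gt 1 s with h | h
        · refine hint.mono_set ?_
          rw [Set.uIcc_of_le zero_le_one, Set.uIcc_of_le hs.le]
          exact Set.Icc_subset_Icc le_rfl h
        · refine hint.trans (AntitoneOn.intervalIntegrable ?_)
          rw [Set.uIcc_of_le h.le]
          exact fun a ha _ _ hab => rearrR_antitone hab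
            (rset_nonempty hfm hfin (lt_of_lt_of_le hs ha.1))
      rw [W_integral_zero μ ν hxm hfm hfNI hfin ht, mul_zero]
      exact hRHS0
  · -- degenerate case: all distribution values infinite
    push_neg at hnd
    have hzero : ∀ s, rearrR (μ.prod ν) (fun w => x w.1 * f w.2) s = 0 := by
      by_cases hx0 : μ {w | x w ≠ 0} = 0
      · refine rearrR_eq_zero_of_dist_zero fun v hv => ?_
        have hsub : {w : X × Y | v < |x w.1 * f w.2|} ⊆
            {w : X | x w ≠ 0} ×ˢ (Set.univ : Set Y) := by
          intro w hw
          simp only [Set.mem_setOf_eq] at hw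
          refine ⟨fun h0 => ?_, Set.mem_univ _⟩
          rw [h0, zero_mul, abs_zero] at hw
          exact absurd hw hv.not_gt
        exact measure_mono_null hsub (by rw [Measure.prod_prod, hx0, zero_mul])
      · obtain ⟨ε, hε, hxε⟩ := exists_pos_level hx0
        refine rearrR_eq_zero_of_dist_top fun v hv => ?_
        refine top_le_iff.1 (le_trans ?_ (prod_dist_ge μ ν hxm hfm hε hv))
        rw [hnd (v / ε), ENNReal.mul_top hxε]
    have hz : ∫ s in (0:ℝ)..t, rearrR (μ.prod ν) (fun w => x w.1 * f w.2) s = 0 := by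
      simp only [hzero]
      simp
    rw [hz, mul_zero]
    exact hRHS0
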